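/- Let B ∈ M_{m,n}(ℚ) and let E_B be the union of all subspaces L_{p,q} = {A : Aq = p} (q ∈ ℤⁿ \ {0}, p ∈ ℤᵐ) containing B. Then the closure of E_B equals B + R_{<n}, where R_{<n} = {C ∈ M_{m,n}(ℝ) : rank C < n}. -/

import Mathlib

open Matrix Filter Topology Finset

lemma aux_rank_lt_iff {m n : ℕ} (C : Matrix (Fin m) (Fin n) ℝ) :
    C.rank < n ↔ ∃ v : Fin n → ℝ, v ≠ 0 ∧ C.mulVec v = 0 := by
  have hfr : C.rank + Module.finrank ℝ (LinearMap.ker C.mulVecLin) = n := by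
    have h := LinearMap.finrank_range_add_finrank_ker C.mulVecLin
    rw [Module.finrank_fin_fun] at h
    exact h
  have hbot : LinearMap.ker C.mulVecLin = ⊥ ↔
      Module.finrank ℝ (LinearMap.ker C.mulVecLin) = 0 := Submodule.finrank_eq_zero.symm
  constructor
  · intro h
    have hne : LinearMap.ker C.mulVecLin ≠ ⊥ := by
      intro hb
      rw [hbot.mp hb] at hfr
      omega
    obtain ⟨v, hv, hv0⟩ := (Submodule.ne_bot_iff _).mp hne
    exact ⟨v, hv0, hv⟩
  · rintro ⟨v, hv0, hv⟩
    have hne : LinearMap.ker C.mulVecLin ≠ ⊥ :=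
      (Submodule.ne_bot_iff _).mpr ⟨v, hv, hv0⟩
    have : Module.finrank ℝ (LinearMap.ker C.mulVecLin) ≠ 0 := fun h0 => hne (hbot.mpr h0)
    omega

lemma aux_closed {m n : ℕ} (B : Matrix (Fin m) (Fin n) ℝ) :
    IsClosed {A : Matrix (Fin m) (Fin n) ℝ | (A - B).rank < n} := by
  have hset : {A : Matrix (Fin m) (Fin n) ℝ | (A - B).rank < n} =
      (fun A : Matrix (Fin m) (Fin n) ℝ => ((A - B)ᵀ * (A - B)).det) ⁻¹' {0} := by
    ext A
    simp only [Set.mem_setOf_eq, Set.mem_preimage, Set.mem_singleton_iff]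
    rw [← Matrix.exists_mulVec_eq_zero_iff (M := (A - B)ᵀ * (A - B))]
    have h1 : (A - B).rank < n ↔ ((A - B)ᵀ * (A - B)).rank < n := by
      rw [Matrix.rank_transpose_mul_self]
    rw [h1, aux_rank_lt_iff]
  rw [hset]
  exact isClosed_singleton.preimage
    (((continuous_id.sub continuous_const).matrix_transpose.matrix_mul
      (continuous_id.sub continuous_const)).matrix_det)

lemma aux_int {m n : ℕ} (B : Matrix (Fin m) (Fin n) ℝ)
    (hB : ∀ i j, ∃ r : ℚ, B i j = (r : ℝ)) :
    ∃ N : ℕ, 0 < N ∧ ∀ z : Fin n → ℤ, ∃ p : Fin m → ℤ,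
      B.mulVec (fun j => ((N : ℝ) * (z j : ℝ))) = fun i => (p i : ℝ) := by
  choose r hr using hB
  refine ⟨∏ p : Fin m × Fin n, (r p.1 p.2).den, Finset.prod_pos fun p _ => (r p.1 p.2).pos, ?_⟩
  set N : ℕ := ∏ p : Fin m × Fin n, (r p.1 p.2).den with hN
  have ht : ∀ i j, ∃ t : ℤ, B i j * (N : ℝ) = (t : ℝ) := by
    intro i j
    obtain ⟨k, hk⟩ : (r i j).den ∣ N := Finset.dvd_prod_of_mem _ (Finset.mem_univ (i, j))
    refine ⟨(r i j).num * k, ?_⟩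
    have hd : (r i j) * ((r i j).den : ℚ) = ((r i j).num : ℚ) := by
      have : ((r i j).den : ℚ) ≠ 0 := by exact_mod_cast (r i j).den_nz
      calc (r i j) * ((r i j).den : ℚ) = ((r i j).num / (r i j).den) * (r i j).den := by
            rw [Rat.num_div_den]
        _ = ((r i j).num : ℚ) := by field_simp
    have hq : (r i j : ℚ) * (N : ℚ) = ((r i j).num * (k : ℤ) : ℤ) := by
      rw [hk]
      push_cast
      rw [← mul_assoc, hd]
    rw [hr i j]
    exact_mod_cast congrArg (fun x : ℚ => (x : ℝ)) hq
  choose t ht using ht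
  intro z
  refine ⟨fun i => ∑ j, t i j * z j, ?_⟩
  funext i
  simp only [Matrix.mulVec, dotProduct]
  push_cast
  refine Finset.sum_congr rfl fun j _ => ?_
  rw [← ht i j]
  ring
theorem closure_EB_eq_translate_low_rank (m n : ℕ)
    (B : Matrix (Fin m) (Fin n) ℝ) (hB : ∀ i j, ∃ r : ℚ, B i j = (r : ℝ)) :
    closure {A : Matrix (Fin m) (Fin n) ℝ | ∃ q : Fin n → ℤ, q ≠ 0 ∧
        ∃ p : Fin m → ℤ, B.mulVec (fun j => (q j : ℝ)) = (fun i => (p i : ℝ)) ∧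
          A.mulVec (fun j => (q j : ℝ)) = fun i => (p i : ℝ)} =
      {A : Matrix (Fin m) (Fin n) ℝ | (A - B).rank < n} := by
  apply Set.Subset.antisymm
  · refine closure_minimal ?_ (aux_closed B)
    rintro A ⟨q, hq, p, hBq, hAq⟩
    rw [Set.mem_setOf_eq, aux_rank_lt_iff]
    refine ⟨fun j => (q j : ℝ), ?_, ?_⟩
    · intro h0
      apply hq
      funext j
      have := congrFun h0 j
      simp only [Pi.zero_apply] at this
      exact_mod_cast this
    · rw [Matrix.sub_mulVec, hAq, hBq]
      simp
  · intro A hA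
    rw [Set.mem_setOf_eq, aux_rank_lt_iff] at hA
    obtain ⟨v, hv0, hv⟩ := hA
    obtain ⟨N, hNpos, hNint⟩ := aux_int B hB
    obtain ⟨j0, hj0⟩ := Function.ne_iff.mp hv0
    set C : Matrix (Fin m) (Fin n) ℝ := A - B with hC
    set z : ℕ → Fin n → ℤ := fun k j => round (((k : ℝ) + 1) * v j) with hz
    set u : ℕ → Fin n → ℝ := fun k j => (z k j : ℝ) / ((k : ℝ) + 1) with huu
    have hk1 : ∀ k : ℕ, (0:ℝ) < (k:ℝ) + 1 := fun k => by positivity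
    -- approximation bound
    have hu_close : ∀ k j, |u k j - v j| ≤ 1 / ((k:ℝ) + 1) := by
      intro k j
      have h1 : |((k:ℝ)+1) * v j - round (((k:ℝ)+1) * v j)| ≤ 1/2 := abs_sub_round _
      have h2 : u k j - v j = ((z k j : ℝ) - ((k:ℝ)+1) * v j) / ((k:ℝ)+1) := by
        simp only [huu]; rw [sub_div, mul_div_cancel_left₀ _ (hk1 k).ne']
      rw [h2, abs_div, abs_of_pos (hk1 k)]
      refine (div_le_div_iff_of_pos_right (hk1 k)).mpr ?_
      have h3 : |(z k j : ℝ) - ((k:ℝ)+1) * v j| = |((k:ℝ)+1) * v j - round (((k:ℝ)+1) * v j)| := by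
        rw [abs_sub_comm]
      rw [h3]
      linarith
    -- coordinatewise convergence
    have hu_tendsto : ∀ j, Filter.Tendsto (fun k => u k j) Filter.atTop (nhds (v j)) := by
      intro j
      have h0 : Filter.Tendsto (fun k : ℕ => u k j - v j) Filter.atTop (nhds 0) :=
        squeeze_zero_norm (fun k => hu_close k j) tendsto_one_div_add_atTop_nhds_zero_nat
      have := h0.add (tendsto_const_nhds (x := v j))
      simpa using this
    set s : ℕ → ℝ := fun k => ∑ j, u k j * u k j with hs
    have hs_tendsto : Filter.Tendsto s Filter.atTop (nhds (∑ j, v j * v j)) :=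
      tendsto_finset_sum _ fun j _ => (hu_tendsto j).mul (hu_tendsto j)
    have hS_pos : 0 < ∑ j, v j * v j :=
      Finset.sum_pos' (fun j _ => mul_self_nonneg _)
        ⟨j0, Finset.mem_univ _, mul_self_pos.mpr hj0⟩
    set c : ℕ → Fin m → ℝ := fun k => C.mulVec (u k) with hc
    have hc_tendsto : ∀ i, Filter.Tendsto (fun k => c k i) Filter.atTop (nhds 0) := by
      intro i
      have h1 : Filter.Tendsto (fun k => ∑ j, C i j * u k j) Filter.atTop
          (nhds (∑ j, C i j * v j)) :=
        tendsto_finset_sum _ fun j _ => ((hu_tendsto j).const_mul _)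
      have h2 : ∑ j, C i j * v j = 0 := by
        have := congrFun hv i
        simpa [Matrix.mulVec, dotProduct] using this
      rw [h2] at h1
      have h3 : (fun k => c k i) = fun k => ∑ j, C i j * u k j := by
        funext k
        simp [hc, Matrix.mulVec, dotProduct]
      rw [h3]
      exact h1
    set A' : ℕ → Matrix (Fin m) (Fin n) ℝ :=
      fun k => Matrix.of fun i j => A i j - c k i * u k j / s k with hA'
    have hA'_tendsto : Filter.Tendsto A' Filter.atTop (nhds A) := by
      refine tendsto_pi_nhds.mpr ?_
      intro i
      rw [tendsto_pi_nhds]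
      intro j
      have hnum : Filter.Tendsto (fun k => c k i * u k j) Filter.atTop (nhds (0 * v j)) :=
        (hc_tendsto i).mul (hu_tendsto j)
      rw [zero_mul] at hnum
      have hfrac := hnum.div hs_tendsto (ne_of_gt hS_pos)
      rw [zero_div] at hfrac
      have := (tendsto_const_nhds (x := A i j)).sub hfrac
      simpa [hA'] using this
    refine mem_closure_of_tendsto hA'_tendsto ?_
    obtain ⟨K, hK⟩ := exists_nat_gt (1 / (2 * |v j0|))
    filter_upwards [Filter.eventually_ge_atTop K] with k hkK
    have habs : (0:ℝ) < |v j0| := abs_pos.mpr hj0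
    -- the key integer vector is nonzero
    have hzj0 : z k j0 ≠ 0 := by
      intro h0
      have h1 : |((k:ℝ)+1) * v j0 - round (((k:ℝ)+1) * v j0)| ≤ 1/2 := abs_sub_round _
      have h0' : (round (((k:ℝ)+1) * v j0) : ℝ) = 0 := by
        have : z k j0 = round (((k:ℝ)+1) * v j0) := rfl
        rw [← this, h0]; simp
      rw [h0', sub_zero, abs_mul, abs_of_pos (hk1 k)] at h1
      have h3 : (K:ℝ) ≤ (k:ℝ) := by exact_mod_cast hkK
      have h4 : 1 / (2 * |v j0|) < (K:ℝ) := hK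
      have h5 : ((k:ℝ)+1) * (2 * |v j0|) ≤ 1 := by nlinarith
      have h6 : ((k:ℝ)+1) ≤ 1 / (2 * |v j0|) := by
        rw [le_div_iff₀ (by positivity)]
        linarith
      linarith
    have huj0 : u k j0 ≠ 0 := by
      simp only [huu]
      apply div_ne_zero _ (ne_of_gt (hk1 k))
      exact_mod_cast hzj0
    have hsk : 0 < s k :=
      Finset.sum_pos' (fun j _ => mul_self_nonneg _)
        ⟨j0, Finset.mem_univ _, mul_self_pos.mpr huj0⟩
    obtain ⟨p, hp⟩ := hNint (z k)
    refine ⟨fun j => (N : ℤ) * z k j, ?_, p, ?_, ?_⟩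
    · intro h0
      have := congrFun h0 j0
      simp only [Pi.zero_apply, mul_eq_zero] at this
      rcases this with h | h
      · exact (Nat.cast_pos.mpr hNpos).ne' (by exact_mod_cast h)
      · exact hzj0 h
    · have hw : (fun j => (((N : ℤ) * z k j : ℤ) : ℝ)) = fun j => (N : ℝ) * (z k j : ℝ) := by
        funext j; push_cast; ring
      rw [hw]; exact hp
    · have hw : (fun j => (((N : ℤ) * z k j : ℤ) : ℝ)) = fun j => (N : ℝ) * (z k j : ℝ) := by
        funext j; push_cast; ring
      rw [hw]
      have hkey : (A' k).mulVec (fun j => (N : ℝ) * (z k j : ℝ)) =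
          B.mulVec (fun j => (N : ℝ) * (z k j : ℝ)) := by
        funext i
        simp only [hA', Matrix.mulVec, dotProduct, Matrix.of_apply, sub_mul]
        rw [Finset.sum_sub_distrib]
        have hCw : ∑ j, (A i j - B i j) * ((N:ℝ) * (z k j : ℝ)) = ((N:ℝ) * ((k:ℝ)+1)) * c k i := by
          have hcki : c k i = ∑ j, (A i j - B i j) * u k j := by
            simp [hc, hC, Matrix.mulVec, dotProduct, Matrix.sub_apply]
          rw [hcki, Finset.mul_sum]
          refine Finset.sum_congr rfl fun j _ => ?_
          have hzj : (z k j : ℝ) = ((k:ℝ)+1) * u k j := by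
            simp only [huu]; rw [mul_div_assoc', eq_div_iff (hk1 k).ne', mul_comm]
          rw [hzj]; ring
        have hPw : ∑ j, (c k i * u k j / s k) * ((N:ℝ) * (z k j : ℝ))
            = ((N:ℝ) * ((k:ℝ)+1)) * c k i := by
          have hterm : ∀ j, (c k i * u k j / s k) * ((N:ℝ) * (z k j : ℝ))
              = (c k i * (N:ℝ) * ((k:ℝ)+1) / s k) * (u k j * u k j) := by
            intro j
            have hzj : (z k j : ℝ) = ((k:ℝ)+1) * u k j := by
              simp only [huu]; rw [mul_div_assoc', eq_div_iff (hk1 k).ne', mul_comm]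
            rw [hzj]; ring
          rw [Finset.sum_congr rfl fun j _ => hterm j, ← Finset.mul_sum]
          have : ∑ j, u k j * u k j = s k := rfl
          rw [this]
          field_simp
        have hAB : ∑ j, A i j * ((N:ℝ) * (z k j : ℝ)) - ∑ j, B i j * ((N:ℝ) * (z k j : ℝ))
            = ∑ j, (A i j - B i j) * ((N:ℝ) * (z k j : ℝ)) := by
          rw [← Finset.sum_sub_distrib]
          exact Finset.sum_congr rfl fun j _ => by ring
        linarith [hCw, hPw, hAB]
      rw [hkey]; exact hp
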